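/- Let (2P_1+P_3)^b be the labelled bipartite graph consisting of two isolated black vertices together with a path on three vertices whose two endpoints are black and whose middle vertex is white. Let G be a bipartite graph with a bipartition (B, W) into independent sets such that (2P_1+P_3)^b is not a labelled induced subgraph of (B, W, E_G). Then every vertex w ∈ W is adjacent to all but at most one vertex of B, or is adjacent to at most one vertex of B. -/
import Mathlib


open SimpleGraph

/-- `B` is the black colour class of a black-and-white labelling of `H`:
every edge of `H` joins a vertex of `B` to a vertex outside `B`
(equivalently, `B` and its complement `Bᶜ` are both independent sets,
i.e. `(B, Bᶜ)` is a bipartition of `H` into two possibly empty independent sets). -/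
def IsBWLabelling {V : Type*} (H : SimpleGraph V) (B : Set V) : Prop :=
  ∀ ⦃u v : V⦄, H.Adj u v → (u ∈ B ↔ v ∉ B)

/-- `H` with black class `BH` is a labelled induced subgraph of `G` with black class `BG`:
there is an injective map preserving both adjacency and non-adjacency which maps
black vertices to black vertices and white vertices to white vertices. -/
def LabelledIndSubgraph {VH VG : Type*} (H : SimpleGraph VH) (BH : Set VH)
    (G : SimpleGraph VG) (BG : Set VG) : Prop :=
  ∃ f : VH → VG, Function.Injective f ∧
    (∀ u v : VH, H.Adj u v ↔ G.Adj (f u) (f v)) ∧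
    (∀ u : VH, u ∈ BH ↔ f u ∈ BG)

/-- `G` is strongly `H^ℓ`-free, where `BH` is the black class of the labelling `ℓ`:
there is no bipartition `(BG, BGᶜ)` of `G` such that `H^ℓ` is a labelled induced
subgraph of `(BG, BGᶜ, E_G)`. -/
def StronglyFree {VG VH : Type*} (G : SimpleGraph VG) (H : SimpleGraph VH)
    (BH : Set VH) : Prop :=
  ¬ ∃ BG : Set VG, IsBWLabelling G BG ∧ LabelledIndSubgraph H BH G BG

/-- `G` is weakly `H^ℓ`-free, where `BH` is the black class of the labelling `ℓ`:
it is not the case that `H^ℓ` is a labelled induced subgraph of `(BG, BGᶜ, E_G)`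
for every bipartition `(BG, BGᶜ)` of `G`. -/
def WeaklyFree {VG VH : Type*} (G : SimpleGraph VG) (H : SimpleGraph VH)
    (BH : Set VH) : Prop :=
  ¬ ∀ BG : Set VG, IsBWLabelling G BG → LabelledIndSubgraph H BH G BG

/-- `G` is `H`-free: `G` contains no induced subgraph isomorphic to `H`. -/
def HFree {VG VH : Type*} (G : SimpleGraph VG) (H : SimpleGraph VH) : Prop :=
  ¬ ∃ f : VH → VG, Function.Injective f ∧ ∀ u v : VH, H.Adj u v ↔ G.Adj (f u) (f v)

/-- The graph `2P_1 + P_3`: two isolated vertices `0, 1` and the path `2-3-4`.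
In the labelling `(2P_1+P_3)^b` the vertices `0, 1, 2, 4` are black and the
middle vertex `3` of the path is white. -/
def g2P1'P3 : SimpleGraph (Fin 5) := SimpleGraph.fromEdgeSet {s(2, 3), s(3, 4)}

/-- Let `G` be a bipartite graph with bipartition `(B, Bᶜ)` such that `(2P_1+P_3)^b`
is not a labelled induced subgraph of `(B, Bᶜ, E_G)`. Then every white vertex `w`
is adjacent to all but at most one vertex of `B`, or is adjacent to at most one
vertex of `B`. -/
theorem stmt_15 {V : Type*} [Fintype V] (G : SimpleGraph V) (B : Set V)
    (hB : IsBWLabelling G B)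
    (hfree : ¬ LabelledIndSubgraph g2P1'P3 ({0, 1, 2, 4} : Set (Fin 5)) G B) :
    ∀ w ∉ B, ({b ∈ B | ¬ G.Adj w b}).ncard ≤ 1 ∨ ({b ∈ B | G.Adj w b}).ncard ≤ 1 := by
  intro w hw
  by_contra h
  push_neg at h
  obtain ⟨h1, h2⟩ := h
  rw [Set.one_lt_ncard_iff (Set.toFinite _)] at h1 h2
  obtain ⟨b0, b1, ⟨hb0B, hb0⟩, ⟨hb1B, hb1⟩, hb01⟩ := h1
  obtain ⟨b2, b4, ⟨hb2B, hb2⟩, ⟨hb4B, hb4⟩, hb24⟩ := h2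
  have hBB : ∀ x ∈ B, ∀ y ∈ B, ¬ G.Adj x y := fun x hx y hy hadj => ((hB hadj).mp hx) hy
  have hwb : ∀ x ∈ B, w ≠ x := fun x hx he => hw (he ▸ hx)
  apply hfree
  refine ⟨![b0, b1, b2, w, b4], ?_, ?_, ?_⟩
  · intro i j hij
    have h02 : b0 ≠ b2 := fun he => hb0 (he ▸ hb2)
    have h04 : b0 ≠ b4 := fun he => hb0 (he ▸ hb4)
    have h12 : b1 ≠ b2 := fun he => hb1 (he ▸ hb2)
    have h14 : b1 ≠ b4 := fun he => hb1 (he ▸ hb4)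
    fin_cases i <;> fin_cases j <;>
      simp_all [Matrix.cons_val_zero, Matrix.cons_val_one]
  · intro u v
    have hadj : ∀ u v : Fin 5, g2P1'P3.Adj u v ↔
        (u = 2 ∧ v = 3) ∨ (u = 3 ∧ v = 2) ∨ (u = 3 ∧ v = 4) ∨ (u = 4 ∧ v = 3) := by
      intro u v
      rw [g2P1'P3, SimpleGraph.fromEdgeSet_adj, Set.mem_insert_iff, Set.mem_singleton_iff,
        Sym2.eq_iff, Sym2.eq_iff]
      fin_cases u <;> fin_cases v <;> simp (config := {decide := true})
    fin_cases u <;> fin_cases v <;>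
      simp only [hadj, Matrix.cons_val_zero, Matrix.cons_val_one, Matrix.head_cons,
        Matrix.cons_val_two, Matrix.tail_cons, Matrix.cons_val_three, Matrix.cons_val_four,
        Matrix.cons_val_succ] <;>
      simp_all (config := {decide := true}) [G.adj_comm w, hBB _ ‹_› _ ‹_›, G.irrefl]
  · intro u
    fin_cases u <;>
      simp_all (config := {decide := true}) [Matrix.cons_val_zero, Matrix.cons_val_one,
        Matrix.head_cons, Matrix.cons_val_succ]
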